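/- Let n, k, r be integers with k, r ≥ 2 and n ≥ k + 1. The r-uniform hypergraph H_L(n; k, r) = K_k^r ∨_r (K_{n−k}^r)^c is vertex-k-maximal. -/

import Mathlib

/-- A finite hypergraph: a finite vertex set together with a finite set of
non-empty edges, each a subset of the vertex set. -/
structure FinHypergraph where
  verts : Finset ℕ
  edges : Finset (Finset ℕ)
  edge_sub : ∀ e ∈ edges, e ⊆ verts
  edge_nonempty : ∀ e ∈ edges, e.Nonempty

namespace FinHypergraph

/-- `H` is `r`-uniform if every edge has cardinality `r`. -/
def IsUniform (H : FinHypergraph) (r : ℕ) : Prop := ∀ e ∈ H.edges, e.card = r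

/-- `H'` is a subhypergraph of `H`. -/
def IsSub (H' H : FinHypergraph) : Prop := H'.verts ⊆ H.verts ∧ H'.edges ⊆ H.edges

/-- Two vertices are adjacent if some edge contains both. -/
def Adj (H : FinHypergraph) (u v : ℕ) : Prop := ∃ e ∈ H.edges, u ∈ e ∧ v ∈ e

/-- `H` is connected if every pair of vertices is joined by a path
(equivalently, a walk, i.e. is reachable via the adjacency relation). -/
def Connected (H : FinHypergraph) : Prop :=
  ∀ u ∈ H.verts, ∀ v ∈ H.verts, Relation.ReflTransGen H.Adj u v

/-- The subhypergraph of `H` induced by the vertex set `Y`. -/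
def induce (H : FinHypergraph) (Y : Finset ℕ) : FinHypergraph where
  verts := H.verts ∩ Y
  edges := H.edges.filter (fun e => e ⊆ Y)
  edge_sub := by
    intro e he
    simp only [Finset.mem_filter] at he
    exact Finset.subset_inter (H.edge_sub e he.1) he.2
  edge_nonempty := by
    intro e he
    simp only [Finset.mem_filter] at he
    exact H.edge_nonempty e he.1

/-- `X` is a vertex-cut of `H` if deleting `X` leaves a disconnected hypergraph. -/
def IsVertexCut (H : FinHypergraph) (X : Finset ℕ) : Prop :=
  X ⊆ H.verts ∧ ¬ (H.induce (H.verts \ X)).Connected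

open Classical in
/-- The vertex-connectivity of `H`: the minimum cardinality of a vertex-cut if one
exists, and `|V(H)| - 1` otherwise. -/
noncomputable def kappa (H : FinHypergraph) : ℕ :=
  if ∃ X, H.IsVertexCut X then sInf {m | ∃ X, H.IsVertexCut X ∧ X.card = m}
  else H.verts.card - 1

/-- `κ̄(H)`: the maximum vertex-connectivity over all subhypergraphs of `H`. -/
noncomputable def kappaBar (H : FinHypergraph) : ℕ :=
  sSup {m | ∃ H' : FinHypergraph, H'.IsSub H ∧ H'.kappa = m}

/-- `H + e`: add the edge `e` (a non-empty subset of the vertices) to `H`. -/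
def addEdge (H : FinHypergraph) (e : Finset ℕ) : FinHypergraph where
  verts := H.verts
  edges := if e ⊆ H.verts ∧ e.Nonempty then insert e H.edges else H.edges
  edge_sub := by
    intro f hf
    split at hf
    · rcases Finset.mem_insert.mp hf with rfl | hf
      · exact (by assumption : f ⊆ H.verts ∧ f.Nonempty).1
      · exact H.edge_sub f hf
    · exact H.edge_sub f hf
  edge_nonempty := by
    intro f hf
    split at hf
    · rcases Finset.mem_insert.mp hf with rfl | hf
      · exact (by assumption : f ⊆ H.verts ∧ f.Nonempty).2
      · exact H.edge_nonempty f hf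
    · exact H.edge_nonempty f hf

/-- `H + F`: add a set `F` of edges to `H`. -/
def addEdges (H : FinHypergraph) (F : Finset (Finset ℕ)) : FinHypergraph where
  verts := H.verts
  edges := H.edges ∪ F.filter (fun e => e ⊆ H.verts ∧ e.Nonempty)
  edge_sub := by
    intro f hf
    rcases Finset.mem_union.mp hf with hf | hf
    · exact H.edge_sub f hf
    · exact (Finset.mem_filter.mp hf).2.1
  edge_nonempty := by
    intro f hf
    rcases Finset.mem_union.mp hf with hf | hf
    · exact H.edge_nonempty f hf
    · exact (Finset.mem_filter.mp hf).2.2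

/-- `H` is vertex-`k`-maximal (as an `r`-uniform hypergraph): `κ̄(H) ≤ k`, but adding
any edge of the complement `H^c` creates a subhypergraph of connectivity at least `k + 1`. -/
def VertexKMaximal (H : FinHypergraph) (r k : ℕ) : Prop :=
  H.IsUniform r ∧ H.kappaBar ≤ k ∧
    ∀ e : Finset ℕ, e ⊆ H.verts → e.card = r → e ∉ H.edges →
      k + 1 ≤ (H.addEdge e).kappaBar

/-- The complete `r`-uniform hypergraph on the vertex set `V`. -/
def completeHG (V : Finset ℕ) (r : ℕ) : FinHypergraph where
  verts := V
  edges := (V.powersetCard r).filter (fun e => e.Nonempty)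
  edge_sub := by
    intro e he
    simp only [Finset.mem_filter, Finset.mem_powersetCard] at he
    exact he.1.1
  edge_nonempty := by
    intro e he
    exact (Finset.mem_filter.mp he).2

/-- The hypergraph on vertex set `V` with no edges. -/
def emptyHG (V : Finset ℕ) : FinHypergraph where
  verts := V
  edges := ∅
  edge_sub := by simp
  edge_nonempty := by simp

/-- The `r`-join `H₁ ∨_r H₂`: the union of `H₁` and `H₂` together with all
`r`-element subsets of `V(H₁) ∪ V(H₂)` meeting both `V(H₁)` and `V(H₂)`. -/
def rJoin (H1 H2 : FinHypergraph) (r : ℕ) : FinHypergraph where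
  verts := H1.verts ∪ H2.verts
  edges := H1.edges ∪ H2.edges ∪
    ((H1.verts ∪ H2.verts).powersetCard r).filter
      (fun e => (e ∩ H1.verts).Nonempty ∧ (e ∩ H2.verts).Nonempty)
  edge_sub := by
    intro e he
    rcases Finset.mem_union.mp he with he | he
    · rcases Finset.mem_union.mp he with he | he
      · exact (H1.edge_sub e he).trans Finset.subset_union_left
      · exact (H2.edge_sub e he).trans Finset.subset_union_right
    · exact (Finset.mem_powersetCard.mp (Finset.mem_filter.mp he).1).1
  edge_nonempty := by
    intro e he
    rcases Finset.mem_union.mp he with he | he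
    · rcases Finset.mem_union.mp he with he | he
      · exact H1.edge_nonempty e he
      · exact H2.edge_nonempty e he
    · obtain ⟨x, hx⟩ := (Finset.mem_filter.mp he).2.1
      exact ⟨x, (Finset.mem_inter.mp hx).1⟩

/-- The union of two hypergraphs. -/
def hUnion (H1 H2 : FinHypergraph) : FinHypergraph where
  verts := H1.verts ∪ H2.verts
  edges := H1.edges ∪ H2.edges
  edge_sub := by
    intro e he
    rcases Finset.mem_union.mp he with he | he
    · exact (H1.edge_sub e he).trans Finset.subset_union_left
    · exact (H2.edge_sub e he).trans Finset.subset_union_right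
  edge_nonempty := by
    intro e he
    rcases Finset.mem_union.mp he with he | he
    · exact H1.edge_nonempty e he
    · exact H2.edge_nonempty e he

/-- The union of the hypergraphs `f 0, …, f (m-1)`. -/
def unionOver (m : ℕ) (f : ℕ → FinHypergraph) : FinHypergraph where
  verts := (Finset.range m).biUnion (fun i => (f i).verts)
  edges := (Finset.range m).biUnion (fun i => (f i).edges)
  edge_sub := by
    intro e he
    obtain ⟨i, hi, hei⟩ := Finset.mem_biUnion.mp he
    exact ((f i).edge_sub e hei).trans (Finset.subset_biUnion_of_mem (fun i => (f i).verts) hi)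
  edge_nonempty := by
    intro e he
    obtain ⟨i, _, hei⟩ := Finset.mem_biUnion.mp he
    exact (f i).edge_nonempty e hei

/-- `C` is a component of `G`: a maximal connected subhypergraph. -/
def IsComponent (G C : FinHypergraph) : Prop :=
  C.IsSub G ∧ C.Connected ∧
    ∀ C' : FinHypergraph, C'.IsSub G → C'.Connected → C.IsSub C' → C' = C

/-- `(S, H₁, H₂)` is a separation triple of `H`: `S` is a minimum vertex-cut,
`H₁ = H[S ∪ V(C₁)]` and `H₂ = H[S ∪ V(C₂)]`, where `C₁` is a component of `H - S`
and `C₂ = H - (S ∪ V(C₁))`. -/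
def IsSeparationTriple (H : FinHypergraph) (S : Finset ℕ) (H1 H2 : FinHypergraph) : Prop :=
  H.IsVertexCut S ∧ (∀ X : Finset ℕ, H.IsVertexCut X → S.card ≤ X.card) ∧
    ∃ C1 : FinHypergraph, IsComponent (H.induce (H.verts \ S)) C1 ∧
      H1 = H.induce (S ∪ C1.verts) ∧
      H2 = H.induce (S ∪ (H.verts \ (S ∪ C1.verts)))

lemma isSub_refl (H : FinHypergraph) : H.IsSub H := ⟨subset_rfl, subset_rfl⟩

lemma adj_symm {H : FinHypergraph} {u v : ℕ} (h : H.Adj u v) : H.Adj v u := by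
  obtain ⟨e, he, hu, hv⟩ := h; exact ⟨e, he, hv, hu⟩

lemma connected_of_hub (G : FinHypergraph) (a : ℕ) (ha : a ∈ G.verts)
    (h : ∀ v ∈ G.verts, v ≠ a → G.Adj a v) : G.Connected := by
  have key : ∀ u ∈ G.verts, Relation.ReflTransGen G.Adj a u := by
    intro u hu
    by_cases h' : u = a
    · rw [h']
    · exact Relation.ReflTransGen.single (h u hu h')
  intro u hu v hv
  have hua : Relation.ReflTransGen G.Adj u a := by
    by_cases h' : u = a
    · rw [h']
    · exact Relation.ReflTransGen.single (adj_symm (h u hu h'))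
  exact hua.trans (key v hv)

lemma not_connected_of_no_edges (G : FinHypergraph) (hG : G.edges = ∅) {u v : ℕ}
    (hu : u ∈ G.verts) (hv : v ∈ G.verts) (huv : u ≠ v) : ¬ G.Connected := by
  intro h
  have h2 : ∀ x y : ℕ, Relation.ReflTransGen G.Adj x y → x = y := by
    intro x y hxy
    induction hxy with
    | refl => rfl
    | tail _ hadj ih =>
      obtain ⟨e, he, _⟩ := hadj
      simp [hG] at he
  exact huv (h2 u v (h u hu v hv))

lemma exists_cut_pair (H : FinHypergraph) {X : Finset ℕ} (h : H.IsVertexCut X) :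
    ∃ u ∈ H.verts \ X, ∃ v ∈ H.verts \ X, u ≠ v ∧
      ¬ Relation.ReflTransGen (H.induce (H.verts \ X)).Adj u v := by
  obtain ⟨hXsub, hnc⟩ := h
  unfold Connected at hnc
  push_neg at hnc
  obtain ⟨u, hu, v, hv, hr⟩ := hnc
  have hverts : (H.induce (H.verts \ X)).verts = H.verts \ X := by
    simp only [induce]
    exact Finset.inter_eq_right.mpr Finset.sdiff_subset
  rw [hverts] at hu hv
  refine ⟨u, hu, v, hv, ?_, hr⟩
  rintro rfl
  exact hr Relation.ReflTransGen.refl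

lemma cut_card_add_two (H : FinHypergraph) {X : Finset ℕ} (h : H.IsVertexCut X) :
    X.card + 2 ≤ H.verts.card := by
  obtain ⟨u, hu, v, hv, huv, -⟩ := H.exists_cut_pair h
  have h2 : 2 ≤ (H.verts \ X).card := by
    rw [Nat.succ_le_iff, Finset.one_lt_card]
    exact ⟨u, hu, v, hv, huv⟩
  have := Finset.card_sdiff_add_card_eq_card h.1
  omega

lemma kappa_le_of_cut (H : FinHypergraph) {X : Finset ℕ} (h : H.IsVertexCut X) :
    H.kappa ≤ X.card := by
  classical
  unfold kappa
  rw [if_pos ⟨X, h⟩]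
  exact Nat.sInf_le ⟨X, h, rfl⟩

lemma kappa_le_pred (H : FinHypergraph) : H.kappa ≤ H.verts.card - 1 := by
  classical
  by_cases hc : ∃ X, H.IsVertexCut X
  · obtain ⟨X, hX⟩ := hc
    have h1 := H.kappa_le_of_cut hX
    have h2 := H.cut_card_add_two hX
    omega
  · unfold kappa
    rw [if_neg hc]

lemma le_kappa (H : FinHypergraph) (c : ℕ) (h1 : ∀ X, H.IsVertexCut X → c ≤ X.card)
    (h2 : c ≤ H.verts.card - 1) : c ≤ H.kappa := by
  classical
  unfold kappa
  split
  · rename_i hc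
    obtain ⟨X, hX⟩ := hc
    refine le_csInf ⟨X.card, X, hX, rfl⟩ ?_
    rintro m ⟨Y, hY, rfl⟩
    exact h1 Y hY
  · exact h2

lemma kappaBar_le {H : FinHypergraph} {k : ℕ} (h : ∀ H' : FinHypergraph, H'.IsSub H → H'.kappa ≤ k) :
    H.kappaBar ≤ k := by
  have hne : {m | ∃ H' : FinHypergraph, H'.IsSub H ∧ H'.kappa = m}.Nonempty :=
    ⟨H.kappa, H, H.isSub_refl, rfl⟩
  refine csSup_le hne ?_
  rintro m ⟨H', hs, rfl⟩
  exact h H' hs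

lemma le_kappaBar {H H' : FinHypergraph} (hs : H'.IsSub H) : H'.kappa ≤ H.kappaBar := by
  apply le_csSup
  · refine ⟨H.verts.card, ?_⟩
    rintro m ⟨G, hG, rfl⟩
    have h1 := G.kappa_le_pred
    have h2 := Finset.card_le_card hG.1
    omega
  · exact ⟨H', hs, rfl⟩

lemma mem_rJoin_edges (A B : Finset ℕ) (r : ℕ) (hr : 1 ≤ r) (f : Finset ℕ) :
    f ∈ (rJoin (completeHG A r) (emptyHG B) r).edges ↔
      f ⊆ A ∪ B ∧ f.card = r ∧ (f ∩ A).Nonempty := by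
  rw [rJoin, Finset.mem_union, Finset.mem_union, Finset.mem_filter, Finset.mem_powersetCard]
  simp only [completeHG, emptyHG, Finset.mem_union, Finset.mem_filter,
    Finset.mem_powersetCard, Finset.notMem_empty, or_false]
  constructor
  · rintro (⟨⟨hfA, hcard⟩, hne⟩ | ⟨⟨hsub, hcard⟩, hA, hB⟩)
    · exact ⟨hfA.trans Finset.subset_union_left, hcard,
        by rwa [Finset.inter_eq_left.mpr hfA]⟩
    · exact ⟨hsub, hcard, hA⟩
  · rintro ⟨hsub, hcard, hA⟩
    by_cases hB : (f ∩ B).Nonempty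
    · exact Or.inr ⟨⟨hsub, hcard⟩, hA, hB⟩
    · left
      have hfA : f ⊆ A := by
        intro x hx
        rcases Finset.mem_union.mp (hsub hx) with h | h
        · exact h
        · exact absurd ⟨x, Finset.mem_inter.mpr ⟨hx, h⟩⟩ hB
      refine ⟨⟨hfA, hcard⟩, ?_⟩
      rw [← Finset.card_pos, hcard]; omega

end FinHypergraph

/-- For `k, r ≥ 2` and `n ≥ k + 1`, the hypergraph
`H_L(n;k,r) = K_k^r ∨_r (K_{n-k}^r)^c` is vertex-`k`-maximal. -/
theorem stmt_6 (n k r : ℕ) (hk : 2 ≤ k) (hr : 2 ≤ r) (hn : k + 1 ≤ n)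
    (A B : Finset ℕ) (hAB : Disjoint A B) (hA : A.card = k) (hB : B.card = n - k) :
    (FinHypergraph.rJoin (FinHypergraph.completeHG A r) (FinHypergraph.emptyHG B) r).VertexKMaximal r k := by
  classical
  set HL := FinHypergraph.rJoin (FinHypergraph.completeHG A r) (FinHypergraph.emptyHG B) r with hHL
  have hr1 : 1 ≤ r := by omega
  have hverts : HL.verts = A ∪ B := rfl
  have hmem : ∀ f, f ∈ HL.edges ↔ f ⊆ A ∪ B ∧ f.card = r ∧ (f ∩ A).Nonempty :=
    fun f => FinHypergraph.mem_rJoin_edges A B r hr1 f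
  refine ⟨fun f hf => ((hmem f).mp hf).2.1, ?_, ?_⟩
  · -- kappaBar ≤ k
    apply FinHypergraph.kappaBar_le
    intro H' hsub
    by_cases hbig : k + 2 ≤ H'.verts.card
    · have hXcut : H'.IsVertexCut (H'.verts ∩ A) := by
        refine ⟨Finset.inter_subset_left, ?_⟩
        set G := H'.induce (H'.verts \ (H'.verts ∩ A)) with hG
        have hsd : H'.verts \ (H'.verts ∩ A) = H'.verts \ A := by
          ext x; simp only [Finset.mem_sdiff, Finset.mem_inter]; tauto
        have hGv : G.verts = H'.verts \ A := by
          rw [hG]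
          show H'.verts ∩ (H'.verts \ (H'.verts ∩ A)) = H'.verts \ A
          rw [hsd, Finset.inter_eq_right.mpr Finset.sdiff_subset]
        have hGe : G.edges = ∅ := by
          rw [Finset.eq_empty_iff_forall_notMem]
          intro f hf
          have hf' : f ∈ H'.edges ∧ f ⊆ H'.verts \ (H'.verts ∩ A) :=
            Finset.mem_filter.mp hf
          obtain ⟨-, -, x, hx⟩ := (hmem f).mp (hsub.2 hf'.1)
          obtain ⟨hxf, hxA⟩ := Finset.mem_inter.mp hx
          have := hf'.2 hxf
          rw [hsd] at this
          exact (Finset.mem_sdiff.mp this).2 hxA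
        have h2 : 2 ≤ (H'.verts \ A).card := by
          have h3 := Finset.card_le_card_sdiff_add_card (s := H'.verts) (t := A)
          omega
        obtain ⟨u, hu, v, hv, huv⟩ := Finset.one_lt_card.mp (by omega : 1 < (H'.verts \ A).card)
        exact FinHypergraph.not_connected_of_no_edges G hGe (hGv ▸ hu) (hGv ▸ hv) huv
      have h1 := H'.kappa_le_of_cut hXcut
      have h2 : (H'.verts ∩ A).card ≤ k := hA ▸ Finset.card_le_card Finset.inter_subset_right
      omega
    · have h1 := H'.kappa_le_pred
      omega
  · -- adding an edge
    intro e hesub hecard henot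
    have heA : ¬ (e ∩ A).Nonempty := fun h => henot ((hmem e).mpr ⟨hesub, hecard, h⟩)
    have hdisj : Disjoint A e := by
      rw [Finset.disjoint_left]
      intro x hxA hxe
      exact heA ⟨x, Finset.mem_inter.mpr ⟨hxe, hxA⟩⟩
    have hcardAe : (A ∪ e).card = k + r := by
      rw [Finset.card_union_of_disjoint hdisj, hA, hecard]
    have hene : e.Nonempty := by rw [← Finset.card_pos, hecard]; omega
    set H2 := HL.addEdge e with hH2
    have hH2v : H2.verts = A ∪ B := rfl
    have hH2e : H2.edges = insert e HL.edges := by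
      show (if e ⊆ HL.verts ∧ e.Nonempty then insert e HL.edges else HL.edges) = _
      rw [if_pos ⟨hesub, hene⟩]
    have hAeSub : A ∪ e ⊆ A ∪ B :=
      Finset.union_subset Finset.subset_union_left hesub
    set H'' := H2.induce (A ∪ e) with hH''
    have hHv : H''.verts = A ∪ e := by
      show HL.verts ∩ (A ∪ e) = A ∪ e
      rw [hverts, Finset.inter_eq_right.mpr hAeSub]
    have hsub'' : H''.IsSub H2 := ⟨Finset.inter_subset_left, Finset.filter_subset _ _⟩
    have hk : k + 1 ≤ H''.kappa := by
      apply FinHypergraph.le_kappa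
      · intro X hX
        by_contra hle
        push_neg at hle
        apply hX.2
        set W := H''.verts \ X with hW
        have hWsub : W ⊆ A ∪ e := hHv ▸ Finset.sdiff_subset
        have hGv : (H''.induce W).verts = W :=
          Finset.inter_eq_right.mpr Finset.sdiff_subset
        have hWcard : r ≤ W.card := by
          have h4 := Finset.card_sdiff_add_card_eq_card hX.1
          rw [← hW, hHv, hcardAe] at h4
          omega
        have hedge : ∀ f, f ⊆ W → f ∈ H2.edges → f ∈ (H''.induce W).edges := by
          intro f hfW hf2
          refine Finset.mem_filter.mpr ⟨?_, hfW⟩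
          exact Finset.mem_filter.mpr ⟨hf2, hfW.trans hWsub⟩
        by_cases hWA : (W ∩ A).Nonempty
        · obtain ⟨a, ha⟩ := hWA
          obtain ⟨haW, haA⟩ := Finset.mem_inter.mp ha
          apply FinHypergraph.connected_of_hub _ a (by rw [hGv]; exact haW)
          intro v hv hva
          rw [hGv] at hv
          have hpair : ({a, v} : Finset ℕ) ⊆ W := by
            intro x hx
            rcases Finset.mem_insert.mp hx with rfl | hx
            · exact haW
            · rw [Finset.mem_singleton] at hx; subst hx; exact hv
          have hpcard : ({a, v} : Finset ℕ).card ≤ r := by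
            have := Finset.card_insert_le a ({v} : Finset ℕ)
            simp only [Finset.card_singleton] at this
            omega
          obtain ⟨f, hpf, hfW, hfcard⟩ :=
            Finset.exists_subsuperset_card_eq hpair hpcard hWcard
          have hfHL : f ∈ HL.edges := (hmem f).mpr
            ⟨hfW.trans (hWsub.trans hAeSub), hfcard,
              ⟨a, Finset.mem_inter.mpr ⟨hpf (Finset.mem_insert_self _ _), haA⟩⟩⟩
          have hf2 : f ∈ H2.edges := by
            rw [hH2e]; exact Finset.mem_insert_of_mem hfHL
          exact ⟨f, hedge f hfW hf2, hpf (Finset.mem_insert_self _ _),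
            hpf (by simp)⟩
        · have hWe : W ⊆ e := by
            intro x hxW
            rcases Finset.mem_union.mp (hWsub hxW) with h | h
            · exact absurd ⟨x, Finset.mem_inter.mpr ⟨hxW, h⟩⟩ hWA
            · exact h
          have hWeq : W = e := Finset.eq_of_subset_of_card_le hWe (hecard ▸ hWcard)
          have heH2 : e ∈ H2.edges := by rw [hH2e]; exact Finset.mem_insert_self _ _
          have heG : e ∈ (H''.induce W).edges := hedge e (hWeq ▸ subset_rfl) heH2
          obtain ⟨a, ha⟩ := hene
          apply FinHypergraph.connected_of_hub _ a (by rw [hGv, hWeq]; exact ha)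
          intro v hv hva
          rw [hGv, hWeq] at hv
          exact ⟨e, heG, ha, hv⟩
      · rw [hHv, hcardAe]; omega
    exact le_trans hk (FinHypergraph.le_kappaBar hsub'')
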